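/- For every $T>0$ and all $x,y\in\mathbb{R}$, the time-convolution of heat kernels satisfies $\int_0^T p(s,x)\,p(T-s,y)\,ds\le \frac{1}{2}$. -/

import Mathlib

open MeasureTheory

noncomputable section

/-- The Gaussian heat kernel `p(t,x) = (2πt)^{-1/2} exp(-x²/(2t))`. -/
def heatKer (t x : ℝ) : ℝ :=
  (Real.sqrt (2 * Real.pi * t))⁻¹ * Real.exp (-x ^ 2 / (2 * t))

lemma heatKer_nonneg (t x : ℝ) : 0 ≤ heatKer t x := by
  unfold heatKer; positivity

lemma heatKer_le (t : ℝ) (ht : 0 ≤ t) (x : ℝ) :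
    heatKer t x ≤ (Real.sqrt (2 * Real.pi * t))⁻¹ := by
  have h1 : Real.exp (-x ^ 2 / (2 * t)) ≤ 1 := by
    rw [Real.exp_le_one_iff]
    exact div_nonpos_of_nonpos_of_nonneg (neg_nonpos.mpr (sq_nonneg x)) (by positivity)
  calc heatKer t x ≤ (Real.sqrt (2 * Real.pi * t))⁻¹ * 1 :=
        mul_le_mul_of_nonneg_left h1 (by positivity)
    _ = _ := mul_one _

set_option maxHeartbeats 1000000 in
/-- Bound on the time-convolution of two heat kernels. -/
theorem heat_kernel_time_convolution_bound (T : ℝ) (hT : 0 < T) (x y : ℝ) :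
    ∫ s in (0:ℝ)..T, heatKer s x * heatKer (T - s) y ≤ 1 / 2 := by
  set g : ℝ → ℝ := fun s => (2 * Real.pi)⁻¹ * (Real.sqrt (s * (T - s)))⁻¹ with hg
  -- pointwise bound on Icc
  have hbound : ∀ s ∈ Set.Icc (0:ℝ) T, heatKer s x * heatKer (T - s) y ≤ g s := by
    intro s hs
    obtain ⟨hs0, hsT⟩ := hs
    have h1 := heatKer_le s hs0 x
    have h2 := heatKer_le (T - s) (by linarith) y
    have key : (Real.sqrt (2 * Real.pi * s))⁻¹ * (Real.sqrt (2 * Real.pi * (T - s)))⁻¹ = g s := by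
      rw [hg]
      rw [← mul_inv, ← Real.sqrt_mul (by positivity)]
      have h3 : 2 * Real.pi * s * (2 * Real.pi * (T - s)) = (2 * Real.pi) ^ 2 * (s * (T - s)) := by
        ring
      rw [h3, Real.sqrt_mul (by positivity), Real.sqrt_sq (by positivity), mul_inv]
    calc heatKer s x * heatKer (T - s) y
        ≤ (Real.sqrt (2 * Real.pi * s))⁻¹ * (Real.sqrt (2 * Real.pi * (T - s)))⁻¹ :=
          mul_le_mul h1 h2 (heatKer_nonneg _ _) (by positivity)
      _ = g s := key
  -- integrability of the majorant g
  have hgint : IntervalIntegrable g volume 0 T := by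
    set h : ℝ → ℝ := fun s => Real.sqrt (2 / T) * (s ^ (-(1/2) : ℝ) + (T - s) ^ (-(1/2) : ℝ))
      with hh
    have hhint : IntervalIntegrable h volume 0 T := by
      apply IntervalIntegrable.const_mul
      apply IntervalIntegrable.add
      · exact intervalIntegral.intervalIntegrable_rpow' (by norm_num)
      · have := (intervalIntegral.intervalIntegrable_rpow'
          (a := 0) (b := T) (r := -(1/2)) (by norm_num)).comp_sub_left T
        simpa using this.symm
    apply hhint.mono_fun
    · apply Measurable.aestronglyMeasurable
      exact (measurable_const.mul ((Real.continuous_sqrt.measurable.comp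
        (measurable_id.mul (measurable_const.sub measurable_id))).inv))
    · rw [Filter.EventuallyLE, ae_restrict_iff' measurableSet_uIoc]
      apply Filter.Eventually.of_forall
      intro s hs
      rw [Set.uIoc_of_le hT.le] at hs
      obtain ⟨hs0, hsT⟩ := hs
      have hgpos : (0:ℝ) ≤ g s := by
        rw [hg]; positivity
      have hhpos : (0:ℝ) ≤ h s := by
        rw [hh]
        have : (0:ℝ) ≤ T - s := by linarith
        positivity
      rw [Real.norm_eq_abs, Real.norm_eq_abs, abs_of_nonneg hgpos, abs_of_nonneg hhpos]
      rcases eq_or_lt_of_le hsT with heq | hlt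
      · -- s = T : g s = 0
        subst heq
        rw [hg]
        simp only [sub_self, mul_zero, Real.sqrt_zero, inv_zero, mul_zero]
        exact hhpos
      · -- 0 < s < T
        have hkey : ∀ a b : ℝ, 0 < a → 0 < b → a ≤ b → a + b = T →
            (Real.sqrt (a * b))⁻¹ ≤ Real.sqrt (2 / T) * a ^ (-(1/2) : ℝ) := by
          intro a b ha hb hab habT
          have hT2 : T / 2 ≤ b := by linarith
          have h1 : Real.sqrt (a * (T / 2)) ≤ Real.sqrt (a * b) :=
            Real.sqrt_le_sqrt (by nlinarith)
          have hpos : 0 < Real.sqrt (a * (T / 2)) := Real.sqrt_pos.mpr (by positivity)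
          have h2 : (Real.sqrt (a * b))⁻¹ ≤ (Real.sqrt (a * (T / 2)))⁻¹ :=
            inv_anti₀ hpos h1
          have h3 : (Real.sqrt (a * (T / 2)))⁻¹ = Real.sqrt (2 / T) * a ^ (-(1/2) : ℝ) := by
            rw [Real.sqrt_mul ha.le, mul_inv]
            rw [show (2 / T) = (T / 2)⁻¹ by rw [inv_div], Real.sqrt_inv]
            rw [Real.rpow_neg ha.le, ← Real.sqrt_eq_rpow]
            ring
          linarith
        have hg2 : g s ≤ (Real.sqrt (s * (T - s)))⁻¹ := by
          rw [hg]
          have : (0:ℝ) ≤ (Real.sqrt (s * (T - s)))⁻¹ := by positivity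
          calc (2 * Real.pi)⁻¹ * (Real.sqrt (s * (T - s)))⁻¹
              ≤ 1 * (Real.sqrt (s * (T - s)))⁻¹ := by
                apply mul_le_mul_of_nonneg_right _ this
                rw [inv_le_one_iff₀]
                right; nlinarith [Real.pi_gt_three]
            _ = _ := one_mul _
        rcases le_total s (T - s) with hle | hle
        · have := hkey s (T - s) hs0 (by linarith) hle (by ring)
          have hnn : (0:ℝ) ≤ Real.sqrt (2 / T) * (T - s) ^ (-(1/2) : ℝ) := by
            have : (0:ℝ) ≤ T - s := by linarith
            positivity
          rw [hh]
          calc g s ≤ (Real.sqrt (s * (T - s)))⁻¹ := hg2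
            _ ≤ Real.sqrt (2 / T) * s ^ (-(1/2) : ℝ) := this
            _ ≤ _ := by nlinarith
        · have := hkey (T - s) s (by linarith) hs0 hle (by ring)
          rw [mul_comm (T - s) s] at this
          have hnn : (0:ℝ) ≤ Real.sqrt (2 / T) * s ^ (-(1/2) : ℝ) := by positivity
          rw [hh]
          calc g s ≤ (Real.sqrt (s * (T - s)))⁻¹ := hg2
            _ ≤ Real.sqrt (2 / T) * (T - s) ^ (-(1/2) : ℝ) := this
            _ ≤ _ := by nlinarith
  -- integrability of the integrand
  have hfint : IntervalIntegrable (fun s => heatKer s x * heatKer (T - s) y) volume 0 T := by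
    apply hgint.mono_fun
    · apply Measurable.aestronglyMeasurable
      apply Measurable.mul
      · unfold heatKer
        exact ((Real.continuous_sqrt.measurable.comp
          (measurable_const.mul measurable_id)).inv).mul
          (Real.measurable_exp.comp (measurable_const.div (measurable_const.mul measurable_id)))
      · unfold heatKer
        exact ((Real.continuous_sqrt.measurable.comp
          (measurable_const.mul (measurable_const.sub measurable_id))).inv).mul
          (Real.measurable_exp.comp (measurable_const.div
            (measurable_const.mul (measurable_const.sub measurable_id))))
    · rw [Filter.EventuallyLE, ae_restrict_iff' measurableSet_uIoc]
      apply Filter.Eventually.of_forall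
      intro s hs
      rw [Set.uIoc_of_le hT.le] at hs
      have hsIcc : s ∈ Set.Icc (0:ℝ) T := ⟨hs.1.le, hs.2⟩
      have h1 := hbound s hsIcc
      have h2 : (0:ℝ) ≤ heatKer s x * heatKer (T - s) y :=
        mul_nonneg (heatKer_nonneg _ _) (heatKer_nonneg _ _)
      have h3 : (0:ℝ) ≤ g s := by rw [hg]; positivity
      rw [Real.norm_eq_abs, Real.norm_eq_abs, abs_of_nonneg h2, abs_of_nonneg h3]
      exact h1
  -- exact value of ∫ g
  have hgval : ∫ s in (0:ℝ)..T, g s = 1 / 2 := by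
    set F : ℝ → ℝ := fun s => (2 * Real.pi)⁻¹ * Real.arcsin ((2 * s - T) / T) with hF
    have hcont : ContinuousOn F (Set.Icc 0 T) := by
      apply Continuous.continuousOn
      exact continuous_const.mul (Real.continuous_arcsin.comp
        (((continuous_const.mul continuous_id).sub continuous_const).div_const T))
    have hderiv : ∀ s ∈ Set.Ioo (0:ℝ) T, HasDerivWithinAt F (g s) (Set.Ioi s) s := by
      intro s hs
      obtain ⟨hs0, hsT⟩ := hs
      have hu1 : (2 * s - T) / T ≠ -1 := by
        rw [Ne, div_eq_iff hT.ne']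
        intro h; linarith
      have hu2 : (2 * s - T) / T ≠ 1 := by
        rw [Ne, div_eq_iff hT.ne']
        intro h; linarith
      have hinner : HasDerivAt (fun s : ℝ => (2 * s - T) / T) (2 / T) s := by
        have : HasDerivAt (fun s : ℝ => 2 * s - T) 2 s := by
          simpa using ((hasDerivAt_id s).const_mul 2).sub_const T
        simpa using this.div_const T
      have harc := (Real.hasDerivAt_arcsin hu1 hu2).comp s hinner
      have hall : HasDerivAt F ((2 * Real.pi)⁻¹ *
          (1 / Real.sqrt (1 - ((2 * s - T) / T) ^ 2) * (2 / T))) s := harc.const_mul _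
      have hsq : 1 - ((2 * s - T) / T) ^ 2 = (2 * Real.sqrt (s * (T - s)) / T) ^ 2 := by
        rw [div_pow, div_pow, mul_pow, Real.sq_sqrt (by nlinarith)]
        field_simp
        ring
      have hne : Real.sqrt (s * (T - s)) ≠ 0 :=
        ne_of_gt (Real.sqrt_pos.mpr (by nlinarith))
      have hval : (2 * Real.pi)⁻¹ *
          (1 / Real.sqrt (1 - ((2 * s - T) / T) ^ 2) * (2 / T)) = g s := by
        rw [hsq, Real.sqrt_sq (by positivity), hg]
        have hs' : (0:ℝ) < √s := Real.sqrt_pos.mpr hs0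
        have hTs' : (0:ℝ) < √(T - s) := Real.sqrt_pos.mpr (by linarith)
        field_simp
      rw [hval] at hall
      exact hall.hasDerivWithinAt
    have := intervalIntegral.integral_eq_sub_of_hasDeriv_right_of_le hT.le hcont hderiv hgint
    rw [this, hF]
    simp only
    rw [show (2 * T - T) / T = 1 by rw [show 2 * T - T = T by ring]; exact div_self hT.ne', show (2 * 0 - T) / T = -1 by field_simp; ring]
    rw [Real.arcsin_one, Real.arcsin_neg_one]
    have hpi := Real.pi_ne_zero
    field_simp
    ring
  calc ∫ s in (0:ℝ)..T, heatKer s x * heatKer (T - s) y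
      ≤ ∫ s in (0:ℝ)..T, g s := intervalIntegral.integral_mono_on hT.le hfint hgint hbound
    _ = 1 / 2 := hgval
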